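/- Let u_1, ..., u_b be a basis of F_q^b. Then the set of vectors {φ(u_i; e_j) : i, j in [b]} spans all of F_q^{binom(b,2)}; in particular the matrix whose rows are these vectors has rank binom(b,2). -/

import Mathlib

/-- The Plücker embedding of the 2×b matrix with rows `a`, `c`:
indexed by pairs (i,j) with i < j, coordinate a_i·c_j − a_j·c_i. -/
def plucker {F : Type*} [Field F] {b : ℕ} (a c : Fin b → F) :
    {p : Fin b × Fin b // p.1 < p.2} → F :=
  fun p => a p.1.1 * c p.1.2 - a p.1.2 * c p.1.1

/-- `plucker` as a linear map in the first argument. -/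
def pluckerL {F : Type*} [Field F] {b : ℕ} (c : Fin b → F) :
    (Fin b → F) →ₗ[F] ({p : Fin b × Fin b // p.1 < p.2} → F) where
  toFun a := plucker a c
  map_add' x y := by funext p; simp [plucker]; ring
  map_smul' r x := by funext p; simp [plucker]; ring

lemma plucker_single_single {F : Type*} [Field F] {b : ℕ} (k l : Fin b) (h : k < l) :
    plucker (Pi.single k (1 : F)) (Pi.single l 1)
      = Pi.single (⟨(k, l), h⟩ : {p : Fin b × Fin b // p.1 < p.2}) 1 := by
  funext q
  obtain ⟨⟨m, n⟩, hmn⟩ := q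
  simp only [plucker, Pi.single_apply]
  by_cases h1 : m = k <;> by_cases h2 : n = l <;>
    simp_all [Subtype.ext_iff, Prod.ext_iff, Fin.ext_iff, Fin.lt_def, eq_comm] <;>
    (try split_ifs) <;> simp_all [Fin.lt_def, -Fin.val_fin_lt] <;> omega

/-- Counting equivalence. -/
def pairEquiv (b : ℕ) : {p : Fin b × Fin b // p.1 < p.2} ≃ Σ j : Fin b, Fin j.val where
  toFun q := ⟨q.1.2, ⟨q.1.1, q.2⟩⟩
  invFun s := ⟨(⟨s.2.1, s.2.2.trans s.1.2⟩, s.1), s.2.2⟩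
  left_inv q := rfl
  right_inv s := rfl

lemma card_pairs (b : ℕ) :
    Fintype.card {p : Fin b × Fin b // p.1 < p.2} = Nat.choose b 2 := by
  rw [Fintype.card_congr (pairEquiv b), Fintype.card_sigma]
  simp only [Fintype.card_fin]
  rw [Fin.sum_univ_eq_sum_range (fun i => i) b, Finset.sum_range_id, Nat.choose_two_right]

theorem plucker_basis_single_span {F : Type*} [Field F] {b : ℕ}
    (u : Module.Basis (Fin b) F (Fin b → F)) :
    Submodule.span F
      (Set.range fun p : Fin b × Fin b => plucker (u p.1) (Pi.single p.2 (1 : F))) = ⊤ ∧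
    (Matrix.of fun (p : Fin b × Fin b) => plucker (u p.1) (Pi.single p.2 (1 : F))).rank =
      Nat.choose b 2 := by
  set S := Submodule.span F
      (Set.range fun p : Fin b × Fin b => plucker (u p.1) (Pi.single p.2 (1 : F))) with hS
  have key : ∀ (k j : Fin b), plucker (Pi.single k (1 : F)) (Pi.single j 1) ∈ S := by
    intro k j
    have hv : (Pi.single k (1 : F) : Fin b → F) ∈ (S.comap (pluckerL (Pi.single j 1))) := by
      have : Submodule.span F (Set.range u) ≤ S.comap (pluckerL (Pi.single j 1)) := by
        rw [Submodule.span_le]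
        rintro _ ⟨i, rfl⟩
        exact Submodule.subset_span ⟨(i, j), rfl⟩
      exact this (u.span_eq ▸ Submodule.mem_top)
    exact hv
  have hspan : S = ⊤ := by
    rw [eq_top_iff, ← (Pi.basisFun F {p : Fin b × Fin b // p.1 < p.2}).span_eq,
      Submodule.span_le]
    rintro _ ⟨q, rfl⟩
    obtain ⟨⟨k, l⟩, h⟩ := q
    have := key k l
    rw [plucker_single_single k l h] at this
    simpa [Pi.basisFun_apply] using this
  refine ⟨hspan, ?_⟩
  rw [Matrix.rank_eq_finrank_span_row]
  have : Set.range (Matrix.of fun (p : Fin b × Fin b) =>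
      plucker (u p.1) (Pi.single p.2 (1 : F))).row
      = Set.range fun p : Fin b × Fin b => plucker (u p.1) (Pi.single p.2 (1 : F)) := rfl
  rw [this, ← hS, hspan, finrank_top]
  rw [Module.finrank_pi, card_pairs]
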